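/- Let G be a countable residually finite group and let A be a finite set. If X ⊆ A^G is a nonempty strongly irreducible subshift of finite type containing a periodic configuration, then there exists a shift-invariant Borel probability measure on X whose support is all of X. -/

import Mathlib

/-- The shift action of a group `G` on configurations `x : G → A`:
`(g • x)(h) = x(g⁻¹h)`. -/
def shift {G A : Type*} [Group G] (g : G) (x : G → A) : G → A :=
  fun h => x (g⁻¹ * h)

/-- A subshift is a closed, shift-invariant subset of `A^G` (with the prodiscrete topology). -/
def IsSubshift {G A : Type*} [Group G] [TopologicalSpace A] (X : Set (G → A)) : Prop :=
  IsClosed X ∧ ∀ (g : G) (x : G → A), x ∈ X → shift g x ∈ X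

/-- A configuration is periodic if its orbit under the shift action is finite. -/
def IsPeriodicConfig {G A : Type*} [Group G] (x : G → A) : Prop :=
  (Set.range fun g : G => shift g x).Finite

/-- A subshift is of finite type if it is defined by a finite window `Ω` and a set of
allowed patterns `P ⊆ A^Ω`. -/
def IsOfFiniteType {G A : Type*} [Group G] (X : Set (G → A)) : Prop :=
  ∃ (Ω : Finset G) (P : Set ({g : G // g ∈ Ω} → A)),
    X = {x : G → A | ∀ g : G, (fun w : {g : G // g ∈ Ω} => shift g x w.1) ∈ P}

/-- A subshift is strongly irreducible if there is a finite `Δ ⊆ G` such that any two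
patterns of configurations of `X` with supports `Ω₁, Ω₂` satisfying `Ω₁Δ⁻¹ ∩ Ω₂ = ∅`
can be glued inside `X`. -/
def IsStronglyIrreducible {G A : Type*} [Group G] (X : Set (G → A)) : Prop :=
  ∃ Δ : Finset G, ∀ Ω₁ Ω₂ : Finset G,
    (∀ a ∈ Ω₁, ∀ d ∈ Δ, a * d⁻¹ ∉ Ω₂) →
    ∀ x₁ ∈ X, ∀ x₂ ∈ X, ∃ x ∈ X,
      (∀ w ∈ Ω₁, x w = x₁ w) ∧ (∀ w ∈ Ω₂, x w = x₂ w)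

/-- A group is residually finite if the intersection of its finite-index subgroups is
trivial, i.e. every nontrivial element avoids some finite-index subgroup. -/
def ResiduallyFinite (H : Type*) [Group H] : Prop :=
  ∀ h : H, h ≠ 1 → ∃ K : Subgroup H, K.FiniteIndex ∧ h ∉ K

section Aux

variable {G A : Type*} [Group G]

lemma shift_shift (g h : G) (x : G → A) : shift g (shift h x) = shift (g * h) x := by
  funext w
  simp only [shift, mul_inv_rev, mul_assoc]

lemma shift_one (x : G → A) : shift (1 : G) x = x := by
  funext w; simp [shift]

lemma shift_continuous [TopologicalSpace A] (g : G) :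
    Continuous (shift g : (G → A) → (G → A)) :=
  continuous_pi fun h => continuous_apply (g⁻¹ * h)

/-- The stabilizer of a configuration under the shift action. -/
def shiftStab (p : G → A) : Subgroup G where
  carrier := {g | shift g p = p}
  one_mem' := shift_one p
  mul_mem' := by
    intro a b ha hb
    simp only [Set.mem_setOf_eq] at *
    rw [← shift_shift, hb, ha]
  inv_mem' := by
    intro a ha
    simp only [Set.mem_setOf_eq] at *
    conv_lhs => rw [← ha]
    rw [shift_shift, inv_mul_cancel, shift_one]

lemma mem_shiftStab {p : G → A} {g : G} : g ∈ shiftStab p ↔ shift g p = p := Iff.rfl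

lemma shiftStab_finiteIndex {p : G → A} (hp : IsPeriodicConfig p) :
    (shiftStab p).FiniteIndex := by
  haveI := hp.to_subtype
  have : Finite (G ⧸ shiftStab p) := by
    refine Finite.of_injective (fun q : G ⧸ shiftStab p =>
      (⟨shift (Quotient.out q) p, ⟨_, rfl⟩⟩ : (Set.range fun g : G => shift g p))) ?_
    intro q₁ q₂ h
    simp only [Subtype.mk.injEq] at h
    have hmem : (Quotient.out q₁)⁻¹ * (Quotient.out q₂) ∈ shiftStab p := by
      show shift ((Quotient.out q₁)⁻¹ * Quotient.out q₂) p = p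
      rw [← shift_shift, ← (show shift (Quotient.out q₁) p = shift (Quotient.out q₂) p from congrArg Subtype.val h), shift_shift, inv_mul_cancel, shift_one]
    have h2 := QuotientGroup.eq.mpr hmem
    calc q₁ = ⟦Quotient.out q₁⟧ := (Quotient.out_eq q₁).symm
      _ = ⟦Quotient.out q₂⟧ := h2
      _ = q₂ := Quotient.out_eq q₂
  exact Subgroup.finiteIndex_of_finite_quotient

lemma periodic_of_le_stab (K : Subgroup G) [K.FiniteIndex] (y : G → A)
    (h : ∀ k ∈ K, shift k y = y) : IsPeriodicConfig y := by
  have : Finite (G ⧸ K) := inferInstance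
  apply (Set.finite_range fun q : G ⧸ K => shift (Quotient.out q) y).subset
  rintro _ ⟨g, rfl⟩
  refine ⟨QuotientGroup.mk g, ?_⟩
  have hk : (Quotient.out (QuotientGroup.mk g : G ⧸ K))⁻¹ * g ∈ K := by
    have := Quotient.out_eq (QuotientGroup.mk g : G ⧸ K)
    rwa [← QuotientGroup.eq]
  set r := Quotient.out (QuotientGroup.mk g : G ⧸ K)
  calc shift r y = shift r (shift (r⁻¹ * g) y) := by rw [h _ hk]
    _ = shift (r * (r⁻¹ * g)) y := shift_shift _ _ _
    _ = shift g y := by rw [mul_inv_cancel_left]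

lemma rf_avoid (hG : ResiduallyFinite G) (S : Finset G) :
    ∃ K : Subgroup G, K.FiniteIndex ∧ ∀ s ∈ S, s ≠ 1 → s ∉ K := by
  classical
  have hfin : ∀ s : {s : G // s ∈ S}, ∃ K : Subgroup G, K.FiniteIndex ∧ ((s : G) ≠ 1 → (s : G) ∉ K) := by
    intro s
    by_cases h : (s : G) = 1
    · exact ⟨⊤, inferInstance, fun h' => absurd h h'⟩
    · obtain ⟨K, hK1, hK2⟩ := hG s h
      exact ⟨K, hK1, fun _ => hK2⟩
  choose f hf1 hf2 using hfin
  refine ⟨⨅ s : {s : G // s ∈ S}, f s, Subgroup.finiteIndex_iInf hf1, ?_⟩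
  intro s hs hs1 hmem
  exact hf2 ⟨s, hs⟩ hs1 (Subgroup.mem_iInf.mp hmem ⟨s, hs⟩)

end Aux

section Periodic

variable {G A : Type*} [Group G] [Countable G] [Finite A]
  [TopologicalSpace A] [DiscreteTopology A]

/-- Key lemma: periodic configurations are dense in a strongly irreducible SFT over a
residually finite group, provided one periodic configuration exists. -/
lemma exists_periodic_agree
    (hG : ResiduallyFinite G) (X : Set (G → A))
    (hX : IsSubshift X) (hft : IsOfFiniteType X) (hsi : IsStronglyIrreducible X)
    (hper : ∃ p ∈ X, IsPeriodicConfig p)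
    (x : G → A) (hx : x ∈ X) (Ω : Finset G) :
    ∃ y ∈ X, IsPeriodicConfig y ∧ ∀ ω ∈ Ω, y ω = x ω := by
  classical
  obtain ⟨p, hpX, hpper⟩ := hper
  obtain ⟨Δ, hΔ⟩ := hsi
  obtain ⟨Ω₀, P, hXeq⟩ := hft
  -- the enlarged gluing separation set and bad region
  set Δ' : Finset G := insert 1 Δ with hΔ'def
  set B : Finset G := Finset.image₂ (fun a d => a * d⁻¹) Ω Δ' with hBdef
  have hΩB : ∀ ω ∈ Ω, ω ∈ B := by
    intro ω hω
    rw [hBdef, Finset.mem_image₂]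
    exact ⟨ω, hω, 1, Finset.mem_insert_self _ _, by simp⟩
  -- Step 1: find z ∈ X with z = x on Ω and z = p outside B.
  obtain ⟨e, he⟩ := exists_surjective_nat G
  set F : ℕ → Finset G := fun n => Finset.image e (Finset.range n) with hFdef
  have hzn : ∀ n : ℕ, ∃ z ∈ X, (∀ w ∈ Ω, z w = x w) ∧ ∀ w ∈ F n \ B, z w = p w := by
    intro n
    refine hΔ Ω (F n \ B) ?_ x hx p hpX
    intro a ha d hd hmem
    rw [Finset.mem_sdiff] at hmem
    exact hmem.2 (by rw [hBdef, Finset.mem_image₂]; exact ⟨a, ha, d, Finset.mem_insert_of_mem hd, rfl⟩)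
  choose Z hZX hZ1 hZ2 using hzn
  have hXcpt : IsCompact X := hX.1.isCompact
  have hle : Filter.map Z Filter.atTop ≤ Filter.principal X :=
    Filter.le_principal_iff.mpr (Filter.eventually_map.mpr (Filter.Eventually.of_forall hZX))
  obtain ⟨z, hzX, hzcl⟩ := hXcpt.exists_clusterPt hle
  have hfreq : ∀ s ∈ nhds z, ∃ᶠ n in Filter.atTop, Z n ∈ s := by
    intro s hs
    exact (mapClusterPt_iff_frequently.mp hzcl) s hs
  have hnhd : ∀ w : G, {v : G → A | v w = z w} ∈ nhds z := by
    intro w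
    have : IsOpen {v : G → A | v w = z w} := by
      have : {v : G → A | v w = z w} = (fun v : G → A => v w) ⁻¹' {z w} := rfl
      rw [this]
      exact (continuous_apply w).isOpen_preimage _ (isOpen_discrete _)
    exact this.mem_nhds rfl
  have hzΩ : ∀ ω ∈ Ω, z ω = x ω := by
    intro ω hω
    obtain ⟨n, hn⟩ := (hfreq _ (hnhd ω)).exists
    rw [← hn, hZ1 n ω hω]
  have hzout : ∀ h : G, h ∉ B → z h = p h := by
    intro h hh
    obtain ⟨m, hm⟩ := he h
    obtain ⟨n, hn, hmem⟩ := Filter.frequently_atTop.mp (hfreq _ (hnhd h)) (m + 1)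
    have hhF : h ∈ F n := by
      rw [hFdef]
      simp only [Finset.mem_image, Finset.mem_range]
      exact ⟨m, by omega, hm⟩
    rw [← hmem, hZ2 n h (Finset.mem_sdiff.mpr ⟨hhF, hh⟩)]
  -- Step 2: choose the finite-index subgroup K
  set M : Finset G := insert 1 (Finset.image₂ (fun u v => u⁻¹ * v) Ω₀ Ω₀) with hMdef
  set S : Finset G := Finset.image₂ (fun b₁ c => b₁ * c) B
    (Finset.image₂ (fun m b₂ => m * b₂⁻¹) M B) with hSdef
  obtain ⟨K₀, hK₀fi, hK₀⟩ := rf_avoid hG S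
  haveI := shiftStab_finiteIndex hpper
  haveI := hK₀fi
  set K : Subgroup G := shiftStab p ⊓ K₀ with hKdef
  haveI : K.FiniteIndex := inferInstance
  have hKp : ∀ k ∈ K, shift k p = p := fun k hk => hk.1
  -- key separation consequence
  have hsep : ∀ k₁ ∈ K, ∀ k₂ ∈ K, ∀ b₁ ∈ B, ∀ b₂ ∈ B, ∀ m ∈ M,
      k₂⁻¹ * k₁ = b₂ * m * b₁⁻¹ → k₁ = k₂ := by
    intro k₁ hk₁ k₂ hk₂ b₁ hb₁ b₂ hb₂ m hm heq
    by_contra hne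
    have hmem : k₂⁻¹ * k₁ ∈ S := by
      rw [hSdef, Finset.mem_image₂]
      refine ⟨b₂, hb₂, m * b₁⁻¹, ?_, by rw [heq, mul_assoc]⟩
      rw [Finset.mem_image₂]
      exact ⟨m, hm, b₁, hb₁, rfl⟩
    have hKmem : k₂⁻¹ * k₁ ∈ K₀ := (mul_mem (inv_mem hk₂) hk₁).2
    have hne1 : k₂⁻¹ * k₁ ≠ 1 := by
      intro h
      exact hne (inv_mul_eq_one.mp h).symm
    exact hK₀ _ hmem hne1 hKmem
  -- uniqueness of representation h = k * b
  have huniq : ∀ (h : G), ∀ k₁ ∈ K, ∀ k₂ ∈ K, k₁⁻¹ * h ∈ B → k₂⁻¹ * h ∈ B → k₁ = k₂ := by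
    intro h k₁ hk₁ k₂ hk₂ hb₁ hb₂
    refine hsep k₁ hk₁ k₂ hk₂ (k₁⁻¹ * h) hb₁ (k₂⁻¹ * h) hb₂ 1 (Finset.mem_insert_self _ _) ?_
    group
  -- window separation: two K-translates of B meeting the same window coincide
  have hwin : ∀ (g : G), ∀ k₁ ∈ K, ∀ k₂ ∈ K, ∀ u₁ ∈ Ω₀, ∀ u₂ ∈ Ω₀,
      k₁⁻¹ * (g⁻¹ * u₁) ∈ B → k₂⁻¹ * (g⁻¹ * u₂) ∈ B → k₁ = k₂ := by
    intro g k₁ hk₁ k₂ hk₂ u₁ hu₁ u₂ hu₂ hb₁ hb₂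
    refine hsep k₁ hk₁ k₂ hk₂ (k₁⁻¹ * (g⁻¹ * u₁)) hb₁ (k₂⁻¹ * (g⁻¹ * u₂)) hb₂
      (u₂⁻¹ * u₁) ?_ ?_
    · rw [hMdef]
      exact Finset.mem_insert_of_mem (Finset.mem_image₂.mpr ⟨u₂, hu₂, u₁, hu₁, rfl⟩)
    · group
  -- Step 3: define the periodization y
  set y : G → A := fun h =>
    if hc : ∃ k, k ∈ K ∧ k⁻¹ * h ∈ B then z ((Classical.choose hc)⁻¹ * h) else p h with hydef
  have hyval : ∀ (h : G), ∀ k ∈ K, k⁻¹ * h ∈ B → y h = z (k⁻¹ * h) := by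
    intro h k hk hb
    have hc : ∃ k', k' ∈ K ∧ k'⁻¹ * h ∈ B := ⟨k, hk, hb⟩
    rw [hydef]
    simp only [dif_pos hc]
    obtain ⟨hck, hcb⟩ := Classical.choose_spec hc
    rw [huniq h (Classical.choose hc) hck k hk hcb hb]
  have hyout : ∀ (h : G), (∀ k ∈ K, k⁻¹ * h ∉ B) → y h = p h := by
    intro h hnb
    rw [hydef]
    have : ¬ ∃ k, k ∈ K ∧ k⁻¹ * h ∈ B := by
      rintro ⟨k, hk, hb⟩; exact hnb k hk hb
    simp only [dif_neg this]
  -- y agrees with x on Ω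
  have hyΩ : ∀ ω ∈ Ω, y ω = x ω := by
    intro ω hω
    have : y ω = z ((1 : G)⁻¹ * ω) := hyval ω 1 (one_mem K) (by simpa using hΩB ω hω)
    rw [this]
    simpa using hzΩ ω hω
  -- y is K-invariant
  have hKy : ∀ k₀ ∈ K, shift k₀ y = y := by
    intro k₀ hk₀
    funext h
    show y (k₀⁻¹ * h) = y h
    by_cases hc : ∃ k, k ∈ K ∧ k⁻¹ * h ∈ B
    · obtain ⟨k, hk, hb⟩ := hc
      have h1 : y h = z (k⁻¹ * h) := hyval h k hk hb
      have h2 : y (k₀⁻¹ * h) = z ((k₀⁻¹ * k)⁻¹ * (k₀⁻¹ * h)) := by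
        apply hyval _ (k₀⁻¹ * k) (mul_mem (inv_mem hk₀) hk)
        have : (k₀⁻¹ * k)⁻¹ * (k₀⁻¹ * h) = k⁻¹ * h := by group
        rwa [this]
      rw [h1, h2]
      congr 1
      group
    · push_neg at hc
      have h1 : y h = p h := hyout h hc
      have h2 : y (k₀⁻¹ * h) = p (k₀⁻¹ * h) := by
        apply hyout
        intro k hk
        have : k⁻¹ * (k₀⁻¹ * h) = (k₀ * k)⁻¹ * h := by group
        rw [this]
        exact hc (k₀ * k) (mul_mem hk₀ hk)
      rw [h1, h2]
      have := hKp k₀ hk₀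
      calc p (k₀⁻¹ * h) = shift k₀ p h := rfl
        _ = p h := by rw [this]
  -- y is periodic
  have hyper : IsPeriodicConfig y := periodic_of_le_stab K y hKy
  -- y ∈ X : check every window
  have hyX : y ∈ X := by
    rw [hXeq]
    intro g
    -- find a witness x' ∈ X agreeing with y on g⁻¹Ω₀
    have hwit : ∃ x' ∈ X, ∀ u ∈ Ω₀, y (g⁻¹ * u) = x' (g⁻¹ * u) := by
      by_cases hc : ∃ u, u ∈ Ω₀ ∧ ∃ k, k ∈ K ∧ k⁻¹ * (g⁻¹ * u) ∈ B
      · obtain ⟨u₀, hu₀, k, hk, hb₀⟩ := hc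
        refine ⟨shift k z, hX.2 k z hzX, ?_⟩
        intro u hu
        show y (g⁻¹ * u) = z (k⁻¹ * (g⁻¹ * u))
        by_cases hcc : ∃ k', k' ∈ K ∧ k'⁻¹ * (g⁻¹ * u) ∈ B
        · obtain ⟨k', hk', hb'⟩ := hcc
          have hkk : k' = k := hwin g k' hk' k hk u hu u₀ hu₀ hb' hb₀
          rw [← hkk]
          exact hyval _ k' hk' hb'
        · push_neg at hcc
          have h1 : y (g⁻¹ * u) = p (g⁻¹ * u) := hyout _ hcc
          have h2 : k⁻¹ * (g⁻¹ * u) ∉ B := hcc k hk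
          rw [h1, hzout _ h2]
          have h3 : p (k⁻¹ * (g⁻¹ * u)) = shift k p (g⁻¹ * u) := rfl
          rw [h3, hKp k hk]
      · push_neg at hc
        refine ⟨p, hpX, ?_⟩
        intro u hu
        exact hyout _ (hc u hu)
    obtain ⟨x', hx'X, hx'⟩ := hwit
    have hx'P : (fun w : {a : G // a ∈ Ω₀} => shift g x' w.1) ∈ P := by
      rw [hXeq] at hx'X
      exact hx'X g
    have heq : (fun w : {a : G // a ∈ Ω₀} => shift g y w.1)
        = (fun w : {a : G // a ∈ Ω₀} => shift g x' w.1) := by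
      funext w
      exact hx' w.1 w.2
    rw [heq]
    exact hx'P
  exact ⟨y, hyX, hyper, hyΩ⟩

end Periodic

section Measures

open MeasureTheory

variable {G A : Type*} [Group G] [TopologicalSpace A] [DiscreteTopology A]
  [MeasurableSpace (G → A)] [BorelSpace (G → A)]

/-- The uniform measure on the (finite) orbit of a periodic configuration. -/
lemma periodic_measure (X : Set (G → A)) (hX : IsSubshift X)
    (y : G → A) (hy : IsPeriodicConfig y) (hyX : y ∈ X) :
    ∃ ν : Measure (G → A), IsProbabilityMeasure ν ∧ ν X = 1 ∧
      (∀ g : G, ν.map (shift g) = ν) ∧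
      ∀ s : Set (G → A), MeasurableSet s → y ∈ s → 0 < ν s := by
  classical
  set O : Finset (G → A) := (show (Set.range fun g : G => shift g y).Finite from hy).toFinset with hOdef
  have hyO : y ∈ O := by
    rw [hOdef, Set.Finite.mem_toFinset]
    exact ⟨1, shift_one y⟩
  have hOX : ∀ w ∈ O, w ∈ X := by
    intro w hw
    rw [hOdef, Set.Finite.mem_toFinset] at hw
    obtain ⟨g, rfl⟩ := hw
    exact hX.2 g y hyX
  have hcard0 : (O.card : ENNReal) ≠ 0 := by
    simp only [ne_eq, Nat.cast_eq_zero, Finset.card_eq_zero]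
    intro h; rw [h] at hyO; exact absurd hyO (Finset.notMem_empty y)
  have hcardtop : (O.card : ENNReal) ≠ ⊤ := ENNReal.natCast_ne_top _
  set ν : Measure (G → A) := (O.card : ENNReal)⁻¹ • ∑ w ∈ O, Measure.dirac w with hνdef
  have hνapp : ∀ s : Set (G → A), ν s = (O.card : ENNReal)⁻¹ * ∑ w ∈ O, Measure.dirac w s := by
    intro s
    rw [hνdef, Measure.smul_apply, Measure.finset_sum_apply, smul_eq_mul]
  have hshiftO : ∀ (g : G), ∀ w ∈ O, shift g w ∈ O := by
    intro g w hw
    rw [hOdef, Set.Finite.mem_toFinset] at *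
    obtain ⟨h, rfl⟩ := hw
    exact ⟨g * h, (shift_shift g h y).symm⟩
  have hprob : IsProbabilityMeasure ν := by
    constructor
    rw [hνapp]
    have : ∀ w ∈ O, Measure.dirac w (Set.univ : Set (G → A)) = 1 := by
      intro w _; simp
    rw [Finset.sum_congr rfl this, Finset.sum_const, nsmul_eq_mul, mul_one,
      ENNReal.inv_mul_cancel hcard0 hcardtop]
  refine ⟨ν, hprob, ?_, ?_, ?_⟩
  · -- ν X = 1
    rw [hνapp]
    have : ∀ w ∈ O, Measure.dirac w X = 1 := by
      intro w hw
      rw [Measure.dirac_apply' _ hX.1.measurableSet]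
      simp [Set.indicator_of_mem (hOX w hw)]
    rw [Finset.sum_congr rfl this, Finset.sum_const, nsmul_eq_mul, mul_one,
      ENNReal.inv_mul_cancel hcard0 hcardtop]
  · -- invariance
    intro g
    have hmeas : Measurable (shift g : (G → A) → (G → A)) :=
      (shift_continuous g).measurable
    have hmapsum : ∀ s : Finset (G → A),
        Measure.map (shift g) (∑ w ∈ s, Measure.dirac w)
          = ∑ w ∈ s, Measure.dirac (shift g w) := by
      intro s
      induction s using Finset.induction with
      | empty => simp [Measure.map_zero]
      | insert a s hns ih =>
        rw [Finset.sum_insert hns, Measure.map_add _ _ hmeas, ih,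
          Measure.map_dirac' hmeas, Finset.sum_insert hns]
    rw [hνdef, Measure.map_smul, hmapsum]
    congr 1
    refine Finset.sum_nbij' (fun w => shift g w) (fun w => shift g⁻¹ w)
      (fun a ha => hshiftO g a ha) (fun a ha => hshiftO g⁻¹ a ha) ?_ ?_ ?_
    · intro a _
      show shift g⁻¹ (shift g a) = a
      rw [shift_shift, inv_mul_cancel, shift_one]
    · intro a _
      show shift g (shift g⁻¹ a) = a
      rw [shift_shift, mul_inv_cancel, shift_one]
    · intro a _; rfl
  · -- positivity on sets containing y
    intro s hs hys
    rw [hνapp]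
    apply ENNReal.mul_pos (by simp [hcard0])
    intro hsum
    have hle : Measure.dirac y s ≤ ∑ w ∈ O, Measure.dirac w s :=
      Finset.single_le_sum (f := fun w => Measure.dirac w s) (fun i _ => zero_le) hyO
    rw [hsum] at hle
    rw [Measure.dirac_apply' _ hs, Set.indicator_of_mem hys] at hle
    simp at hle
end Measures

open MeasureTheory in
/-- If `G` is a countable residually finite group, `A` a finite set and `X ⊆ A^G` a
nonempty strongly irreducible subshift of finite type containing a periodic
configuration, then there is a shift-invariant Borel probability measure concentrated
on `X` whose support is all of `X` (every nonempty relatively open subset of `X` has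
positive measure). -/
theorem exists_invariant_measure_full_support
    {G A : Type*} [Group G] [Countable G] [Finite A]
    [TopologicalSpace A] [DiscreteTopology A]
    [MeasurableSpace (G → A)] [BorelSpace (G → A)]
    (hG : ResiduallyFinite G) (X : Set (G → A))
    (hne : X.Nonempty) (hX : IsSubshift X) (hft : IsOfFiniteType X)
    (hsi : IsStronglyIrreducible X) (hper : ∃ x ∈ X, IsPeriodicConfig x) :
    ∃ μ : Measure (G → A), IsProbabilityMeasure μ ∧ μ X = 1 ∧
      (∀ g : G, μ.map (shift g) = μ) ∧
      (∀ U : Set (G → A), IsOpen U → (U ∩ X).Nonempty → 0 < μ (U ∩ X)) := by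
  classical
  obtain ⟨b, hbc, hbne, hbasis⟩ := TopologicalSpace.exists_countable_basis (G → A)
  obtain ⟨f, hf⟩ := (hbc.insert ∅).exists_eq_range ⟨∅, Set.mem_insert _ _⟩
  have hfopen : ∀ n, IsOpen (f n) := by
    intro n
    have : f n ∈ insert ∅ b := hf ▸ Set.mem_range_self n
    rcases this with h | h
    · rw [h]; exact isOpen_empty
    · exact hbasis.isOpen h
  -- chooser: a periodic configuration in each basic open set meeting X
  have hch : ∀ n, ∃ y, y ∈ X ∧ IsPeriodicConfig y ∧ ((f n ∩ X).Nonempty → y ∈ f n) := by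
    intro n
    by_cases hcase : (f n ∩ X).Nonempty
    · obtain ⟨w, hwf, hwX⟩ := hcase
      obtain ⟨I, u, hIu, hsub⟩ := isOpen_pi_iff.mp (hfopen n) w hwf
      obtain ⟨y, hyX, hyper, hyI⟩ :=
        exists_periodic_agree hG X hX hft hsi hper w hwX I
      refine ⟨y, hyX, hyper, fun _ => hsub ?_⟩
      intro i hi
      rw [hyI i hi]
      exact (hIu i hi).2
    · obtain ⟨p, hpX, hpper⟩ := hper
      exact ⟨p, hpX, hpper, fun h => absurd h hcase⟩
  choose Y hYX hYper hYmem using hch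
  have hmes : ∀ n, ∃ ν : Measure (G → A), IsProbabilityMeasure ν ∧ ν X = 1 ∧
      (∀ g : G, ν.map (shift g) = ν) ∧
      ∀ s : Set (G → A), MeasurableSet s → Y n ∈ s → 0 < ν s :=
    fun n => periodic_measure X hX (Y n) (hYper n) (hYX n)
  choose ν hν1 hν2 hν3 hν4 using hmes
  set c : ℕ → ENNReal := fun n => (2 : ENNReal)⁻¹ ^ (n + 1) with hcdef
  have hc0 : ∀ n, c n ≠ 0 := by
    intro n
    rw [hcdef]
    exact pow_ne_zero _ (by simp)
  have hcsum : ∑' n, c n = 1 := by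
    rw [hcdef]
    calc ∑' n : ℕ, (2 : ENNReal)⁻¹ ^ (n + 1)
        = ∑' n : ℕ, (2 : ENNReal)⁻¹ ^ n * 2⁻¹ := by
          apply tsum_congr; intro n; rw [pow_succ]
      _ = (∑' n : ℕ, (2 : ENNReal)⁻¹ ^ n) * 2⁻¹ := ENNReal.tsum_mul_right
      _ = (1 - 2⁻¹)⁻¹ * 2⁻¹ := by rw [ENNReal.tsum_geometric]
      _ = 2 * 2⁻¹ := by rw [ENNReal.one_sub_inv_two, inv_inv]
      _ = 1 := ENNReal.mul_inv_cancel (by simp) (by simp)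
  set μ : Measure (G → A) := Measure.sum (fun n => c n • ν n) with hμdef
  have hμapp : ∀ s : Set (G → A), MeasurableSet s → μ s = ∑' n, c n * ν n s := by
    intro s hs
    rw [hμdef, Measure.sum_apply _ hs]
    apply tsum_congr
    intro n
    rw [Measure.smul_apply, smul_eq_mul]
  have hprob : IsProbabilityMeasure μ := by
    constructor
    rw [hμapp _ MeasurableSet.univ]
    have : ∀ n, c n * ν n Set.univ = c n := by
      intro n
      haveI := hν1 n
      rw [measure_univ, mul_one]
    rw [tsum_congr this, hcsum]
  refine ⟨μ, hprob, ?_, ?_, ?_⟩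
  · rw [hμapp _ hX.1.measurableSet]
    have : ∀ n, c n * ν n X = c n := by
      intro n; rw [hν2 n, mul_one]
    rw [tsum_congr this, hcsum]
  · intro g
    have hmeas : Measurable (shift g : (G → A) → (G → A)) :=
      (shift_continuous g).measurable
    apply Measure.ext
    intro s hs
    rw [Measure.map_apply hmeas hs, hμapp _ (hmeas hs), hμapp _ hs]
    apply tsum_congr
    intro n
    congr 1
    have := hν3 n g
    calc ν n (shift g ⁻¹' s) = (ν n).map (shift g) s := (Measure.map_apply hmeas hs).symm
      _ = ν n s := by rw [this]
  · intro U hU hUX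
    obtain ⟨w, hwU, hwX⟩ := hUX
    obtain ⟨v, hvb, hwv, hvU⟩ := hbasis.exists_subset_of_mem_open hwU hU
    have : v ∈ Set.range f := hf ▸ Set.mem_insert_of_mem _ hvb
    obtain ⟨n, rfl⟩ := this
    have hYn : Y n ∈ U ∩ X := by
      have hmem : Y n ∈ f n := hYmem n ⟨w, hwv, hwX⟩
      exact ⟨hvU hmem, hYX n⟩
    have hmeasUX : MeasurableSet (U ∩ X) := hU.measurableSet.inter hX.1.measurableSet
    have hlow : c n * ν n (U ∩ X) ≤ μ (U ∩ X) := by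
      rw [hμapp _ hmeasUX]
      exact ENNReal.le_tsum n
    refine lt_of_lt_of_le ?_ hlow
    exact ENNReal.mul_pos (hc0 n) (hν4 n _ hmeasUX hYn).ne'
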